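/- arXiv:2002.04424 — 2 statements merged into one kernel-verified Lean document; each statement's English description precedes it below -/
import Mathlib

section
/- Let τ and η be independent random variables with P(τ < t) = 1 − e^{−λt} (t ≥ 0) and η ≥ 0 with arbitrary distribution G, where q = P(τ < η) ∈ (0,1). Let (τ_i, η_i) be i.i.d. copies, ε_i = 1{τ_i < η_i}, ν = min{n : ε_n = 1}, and S_ν = Σ_{i=1}^ν min(τ_i, η_i). Then P(S_ν ≥ t) = e^{−λt} for all t ≥ 0; that is, S_ν is exponentially distributed with parameter λ. -/
open MeasureTheory ProbabilityTheory Real Set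
open scoped ENNReal NNReal

namespace GeomSumMinAux

/-- first index `n ≥ 1` with success -/
noncomputable def fIdx (x : ℕ → ℝ × ℝ) : ℕ := sInf {n | 1 ≤ n ∧ (x n).1 < (x n).2}

noncomputable def fSum (x : ℕ → ℝ × ℝ) : ℝ :=
  ∑ i ∈ Finset.Icc 1 (fIdx x), min (x i).1 (x i).2

lemma fIdx_eq_iff (x : ℕ → ℝ × ℝ) (n : ℕ) :
    fIdx x = n ↔ ((1 ≤ n ∧ (x n).1 < (x n).2) ∧ ∀ m < n, ¬(1 ≤ m ∧ (x m).1 < (x m).2))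
      ∨ (n = 0 ∧ ∀ m, ¬(1 ≤ m ∧ (x m).1 < (x m).2)) := by
  constructor
  · intro h
    by_cases hne : {k | 1 ≤ k ∧ (x k).1 < (x k).2}.Nonempty
    · left
      refine ⟨h ▸ Nat.sInf_mem hne, fun m hm => ?_⟩
      exact Nat.notMem_of_lt_sInf (h ▸ hm)
    · right
      rw [Set.not_nonempty_iff_eq_empty] at hne
      refine ⟨?_, fun m hm => (Set.eq_empty_iff_forall_notMem.mp hne m) hm⟩
      rw [← h, fIdx, hne, Nat.sInf_empty]
  · rintro (⟨h1, h2⟩ | ⟨h0, hall⟩)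
    · refine le_antisymm (Nat.sInf_le h1) ?_
      by_contra hlt
      push_neg at hlt
      have hmem : fIdx x ∈ {k | 1 ≤ k ∧ (x k).1 < (x k).2} := Nat.sInf_mem ⟨n, h1⟩
      exact h2 _ hlt hmem
    · subst h0
      have : {k | 1 ≤ k ∧ (x k).1 < (x k).2} = ∅ :=
        Set.eq_empty_iff_forall_notMem.mpr hall
      rw [fIdx, this, Nat.sInf_empty]

lemma measurable_cond (n : ℕ) :
    MeasurableSet {x : ℕ → ℝ × ℝ | 1 ≤ n ∧ (x n).1 < (x n).2} := by
  by_cases h : 1 ≤ n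
  · simp only [h, true_and]
    exact measurableSet_lt ((measurable_fst).comp (measurable_pi_apply n))
      ((measurable_snd).comp (measurable_pi_apply n))
  · simp [h]

lemma measurable_fIdx : Measurable fIdx := by
  apply measurable_to_countable'
  intro n
  have : fIdx ⁻¹' {n} = ({x | (1 ≤ n ∧ (x n).1 < (x n).2)} ∩
      ⋂ m ∈ Finset.range n, {x | 1 ≤ m ∧ (x m).1 < (x m).2}ᶜ) ∪
      (if n = 0 then ⋂ m : ℕ, {x : ℕ → ℝ × ℝ | 1 ≤ m ∧ (x m).1 < (x m).2}ᶜ else ∅) := by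
    ext x
    simp only [Set.mem_preimage, Set.mem_singleton_iff, fIdx_eq_iff, Set.mem_union,
      Set.mem_inter_iff, Set.mem_iInter, Finset.mem_range, Set.mem_compl_iff, Set.mem_setOf_eq]
    constructor
    · rintro (⟨h1, h2⟩ | ⟨h0, hall⟩)
      · exact Or.inl ⟨h1, fun m hm => h2 m hm⟩
      · right; simp [h0, hall]
    · rintro (⟨h1, h2⟩ | h)
      · exact Or.inl ⟨h1, fun m hm => h2 m hm⟩
      · by_cases h0 : n = 0
        · simp only [h0, if_pos] at h
          exact Or.inr ⟨h0, fun m => Set.mem_iInter.mp h m⟩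
        · simp [h0] at h
  rw [this]
  apply MeasurableSet.union
  · exact (measurable_cond n).inter (MeasurableSet.biInter (Finset.range n).countable_toSet
      (fun m _ => (measurable_cond m).compl))
  · split
    · exact MeasurableSet.iInter fun m => (measurable_cond m).compl
    · exact MeasurableSet.empty

lemma measurable_fSum : Measurable fSum := by
  have h : Measurable (fun p : (ℕ → ℝ × ℝ) × ℕ => ∑ i ∈ Finset.Icc 1 p.2,
      min (p.1 i).1 (p.1 i).2) := by
    apply measurable_from_prod_countable_left
    intro n
    exact Finset.measurable_sum (Finset.Icc 1 n) (fun i _ =>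
      ((measurable_fst.comp (measurable_pi_apply i))).min
      ((measurable_snd.comp (measurable_pi_apply i))))
  have : fSum = (fun p : (ℕ → ℝ × ℝ) × ℕ => ∑ i ∈ Finset.Icc 1 p.2,
      min (p.1 i).1 (p.1 i).2) ∘ (fun x => (x, fIdx x)) := rfl
  rw [this]
  exact h.comp (measurable_id.prodMk measurable_fIdx)

/-- fSum only depends on coordinates `n ≥ 1`. -/
lemma fIdx_congr {x y : ℕ → ℝ × ℝ} (h : ∀ n, 1 ≤ n → x n = y n) : fIdx x = fIdx y := by
  have : {n | 1 ≤ n ∧ (x n).1 < (x n).2} = {n | 1 ≤ n ∧ (y n).1 < (y n).2} := by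
    ext n
    constructor
    · rintro ⟨h1, h2⟩; exact ⟨h1, by rw [← h n h1]; exact h2⟩
    · rintro ⟨h1, h2⟩; exact ⟨h1, by rw [h n h1]; exact h2⟩
  rw [fIdx, this, fIdx]

lemma fSum_congr {x y : ℕ → ℝ × ℝ} (h : ∀ n, 1 ≤ n → x n = y n) : fSum x = fSum y := by
  rw [fSum, fSum, fIdx_congr h]
  apply Finset.sum_congr rfl
  intro i hi
  rw [h i (Finset.mem_Icc.mp hi).1]


lemma fSum_one {x : ℕ → ℝ × ℝ} (h : (x 1).1 < (x 1).2) : fSum x = (x 1).1 := by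
  have h1 : fIdx x = 1 := by
    rw [fIdx_eq_iff]
    exact Or.inl ⟨⟨le_refl 1, h⟩, fun m hm => by omega⟩
  rw [fSum, h1]
  simp [min_eq_left h.le]

lemma fSum_zero {x : ℕ → ℝ × ℝ} (h : ∀ n, 1 ≤ n → ¬((x n).1 < (x n).2)) : fSum x = 0 := by
  have h1 : fIdx x = 0 := by
    rw [fIdx_eq_iff]
    exact Or.inr ⟨rfl, fun m hm => h m hm.1 hm.2⟩
  rw [fSum, h1]
  simp

lemma fSum_rec {x : ℕ → ℝ × ℝ} (h1 : ¬((x 1).1 < (x 1).2))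
    (h2 : ∃ n, 2 ≤ n ∧ (x n).1 < (x n).2) :
    fSum x = (x 1).2 + fSum (fun n => x (n + 1)) := by
  obtain ⟨n0, hn0, hc0⟩ := h2
  have hne : fIdx x ∈ {n | 1 ≤ n ∧ (x n).1 < (x n).2} :=
    Nat.sInf_mem ⟨n0, by omega, hc0⟩
  set k := fIdx x with hk
  have hk1 : 1 ≤ k := hne.1
  have hkc : (x k).1 < (x k).2 := hne.2
  have hk2 : 2 ≤ k := by
    rcases Nat.lt_or_ge k 2 with h | h
    · interval_cases k
      · exact absurd hkc h1
    · exact h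
  have hmin : ∀ m < k, ¬(1 ≤ m ∧ (x m).1 < (x m).2) := fun m hm =>
    Nat.notMem_of_lt_sInf hm
  have hshift : fIdx (fun n => x (n + 1)) = k - 1 := by
    rw [fIdx_eq_iff]
    left
    constructor
    · constructor
      · omega
      · have : k - 1 + 1 = k := by omega
        rw [this]; exact hkc
    · intro m hm hc
      exact hmin (m + 1) (by omega) ⟨by omega, hc.2⟩
  have hre : fSum (fun n => x (n + 1)) = ∑ j ∈ Finset.Icc 2 k, min (x j).1 (x j).2 := by
    rw [fSum, hshift]
    rw [show Finset.Icc 2 k = (Finset.Icc 1 (k - 1)).map (addRightEmbedding 1) by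
      rw [Finset.map_add_right_Icc]; congr 1; omega]
    rw [Finset.sum_map]
    rfl
  have hins : Finset.Icc 1 k = insert 1 (Finset.Icc 2 k) := by
    ext j
    simp only [Finset.mem_Icc, Finset.mem_insert]
    omega
  rw [fSum, ← hk, hins, Finset.sum_insert (by simp), hre]
  congr 1
  exact min_eq_right (le_of_not_gt h1)


variable {Ω : Type*} [MeasurableSpace Ω]

lemma map_fam_shift_eq (μ : Measure Ω) [IsProbabilityMeasure μ]
    (X : ℕ → Ω → ℝ × ℝ) (hmeas : ∀ i, Measurable (X i))
    (hindep : iIndepFun X μ)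
    (hident : ∀ i j, IdentDistrib (X i) (X j) μ μ) (fs : Finset ℕ) :
    μ.map (fun ω => fs.restrict (fun n => X n ω)) =
      μ.map (fun ω => fs.restrict (fun n => X (n + 1) ω)) := by
  have hg1 : Measurable (fun ω => fs.restrict (fun n => X n ω)) :=
    measurable_pi_lambda _ (fun i => hmeas i)
  have hg2 : Measurable (fun ω => fs.restrict (fun n => X (n + 1) ω)) :=
    measurable_pi_lambda _ (fun i => hmeas (i + 1))
  haveI : IsProbabilityMeasure (μ.map (fun ω => fs.restrict (fun n => X n ω))) :=
    Measure.isProbabilityMeasure_map hg1.aemeasurable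
  haveI : IsProbabilityMeasure (μ.map (fun ω => fs.restrict (fun n => X (n + 1) ω))) :=
    Measure.isProbabilityMeasure_map hg2.aemeasurable
  refine ext_of_generate_finite _ generateFrom_pi.symm isPiSystem_pi ?_ (by simp)
  rintro _ ⟨B, hB, rfl⟩
  simp only [Set.mem_pi, Set.mem_univ, forall_true_left, Set.mem_setOf_eq] at hB
  have hBm : MeasurableSet (Set.pi Set.univ B) :=
    MeasurableSet.univ_pi (fun i => hB i)
  rw [Measure.map_apply hg1 hBm, Measure.map_apply hg2 hBm]
  set setsN : ℕ → Set (ℝ × ℝ) := fun i => if h : i ∈ fs then B ⟨i, h⟩ else Set.univ with hsetsN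
  have hsetsNm : ∀ i ∈ fs, MeasurableSet (setsN i) := by
    intro i hi
    simp only [hsetsN, dif_pos hi]
    exact hB ⟨i, hi⟩
  have hpre1 : (fun ω => fs.restrict (fun n => X n ω)) ⁻¹' (Set.pi Set.univ B) =
      ⋂ i ∈ fs, X i ⁻¹' setsN i := by
    ext ω
    simp only [Set.mem_preimage, Set.mem_pi, Set.mem_univ, forall_true_left, Set.mem_iInter]
    constructor
    · intro h i hi
      simp only [hsetsN, dif_pos hi]
      exact h ⟨i, hi⟩
    · intro h i
      have := h i i.2
      exact (by simpa only [hsetsN, dif_pos i.2] using this : X i ω ∈ B ⟨i, i.2⟩)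
  have hpre2 : (fun ω => fs.restrict (fun n => X (n + 1) ω)) ⁻¹' (Set.pi Set.univ B) =
      ⋂ i ∈ fs, X (i + 1) ⁻¹' setsN i := by
    ext ω
    simp only [Set.mem_preimage, Set.mem_pi, Set.mem_univ, forall_true_left, Set.mem_iInter]
    constructor
    · intro h i hi
      simp only [hsetsN, dif_pos hi]
      exact h ⟨i, hi⟩
    · intro h i
      have := h i i.2
      exact (by simpa only [hsetsN, dif_pos i.2] using this : X (i + 1) ω ∈ B ⟨i, i.2⟩)
  rw [hpre1, hpre2]
  rw [hindep.measure_inter_preimage_eq_mul fs hsetsNm]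
  -- shifted side
  have hmap : (⋂ i ∈ fs, X (i + 1) ⁻¹' setsN i) =
      ⋂ j ∈ fs.map ⟨Nat.succ, Nat.succ_injective⟩, X j ⁻¹' setsN (j - 1) := by
    ext ω
    simp only [Set.mem_iInter, Finset.mem_map, Function.Embedding.coeFn_mk]
    constructor
    · rintro h j ⟨i, hi, rfl⟩
      simpa using h i hi
    · intro h i hi
      simpa using h (i + 1) ⟨i, hi, rfl⟩
  have hsetsNm' : ∀ j ∈ fs.map ⟨Nat.succ, Nat.succ_injective⟩, MeasurableSet (setsN (j - 1)) := by
    intro j hj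
    rw [Finset.mem_map] at hj
    obtain ⟨i, hi, rfl⟩ := hj
    simpa using hsetsNm i hi
  rw [hmap, hindep.measure_inter_preimage_eq_mul _ hsetsNm', Finset.prod_map]
  apply Finset.prod_congr rfl
  intro i hi
  simp only [Function.Embedding.coeFn_mk, Nat.succ_sub_one]
  exact ((hident (Nat.succ i) i).measure_mem_eq (hsetsNm i hi)).symm

lemma map_shift_eq (μ : Measure Ω) [IsProbabilityMeasure μ]
    (X : ℕ → Ω → ℝ × ℝ) (hmeas : ∀ i, Measurable (X i))
    (hindep : iIndepFun X μ)
    (hident : ∀ i j, IdentDistrib (X i) (X j) μ μ) :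
    μ.map (fun ω n => X n ω) = μ.map (fun ω n => X (n + 1) ω) := by
  have hY : Measurable (fun ω n => X n ω) := measurable_pi_lambda _ hmeas
  have hY' : Measurable (fun ω n => X (n + 1) ω) := measurable_pi_lambda _ (fun n => hmeas (n + 1))
  haveI : IsProbabilityMeasure (μ.map (fun ω n => X n ω)) :=
    Measure.isProbabilityMeasure_map hY.aemeasurable
  haveI : IsProbabilityMeasure (μ.map (fun ω n => X (n + 1) ω)) :=
    Measure.isProbabilityMeasure_map hY'.aemeasurable
  refine ext_of_generate_finite _ generateFrom_measurableCylinders.symm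
    isPiSystem_measurableCylinders ?_ (by simp)
  intro t ht
  rw [mem_measurableCylinders] at ht
  obtain ⟨fs, B, hB, rfl⟩ := ht
  rw [Measure.map_apply hY (hB.cylinder), Measure.map_apply hY' (hB.cylinder)]
  have h1 : (fun ω n => X n ω) ⁻¹' cylinder fs B =
      (fun ω => fs.restrict (fun n => X n ω)) ⁻¹' B := rfl
  have h2 : (fun ω n => X (n + 1) ω) ⁻¹' cylinder fs B =
      (fun ω => fs.restrict (fun n => X (n + 1) ω)) ⁻¹' B := rfl
  rw [h1, h2]
  have hg1 : Measurable (fun ω => fs.restrict (fun n => X n ω)) :=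
    measurable_pi_lambda _ (fun i => hmeas i)
  have hg2 : Measurable (fun ω => fs.restrict (fun n => X (n + 1) ω)) :=
    measurable_pi_lambda _ (fun i => hmeas (i + 1))
  rw [← Measure.map_apply hg1 hB, ← Measure.map_apply hg2 hB,
    map_fam_shift_eq μ X hmeas hindep hident fs]


end GeomSumMinAux

open GeomSumMinAux

/-- for τ ~ Exp(λ) independent of η ≥ 0, with i.i.d. copies,
ε_i = 1{τ_i < η_i}, ν the first success, the sum S_ν = Σ_{i=1}^ν min(τ_i, η_i)
is exponential with parameter λ: P(S_ν ≥ t) = e^{−λt}. -/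
theorem geometric_sum_min_exponential
    {Ω : Type*} [MeasurableSpace Ω] (μ : Measure Ω) [IsProbabilityMeasure μ]
    (lam : ℝ) (hlam : 0 < lam)
    (τ η : ℕ → Ω → ℝ)
    (hmeas : ∀ i, Measurable fun ω => (τ i ω, η i ω))
    (hindep : iIndepFun (fun i ω => (τ i ω, η i ω)) μ)
    (hident : ∀ i j, IdentDistrib (fun ω => (τ i ω, η i ω))
      (fun ω => (τ j ω, η j ω)) μ μ)
    (hpair : ∀ i, IndepFun (τ i) (η i) μ)
    (hτ : ∀ i, ∀ t ≥ (0:ℝ), μ {ω | τ i ω < t} = ENNReal.ofReal (1 - Real.exp (-lam * t)))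
    (hηpos : ∀ i, 0 ≤ᵐ[μ] η i)
    (q : ℝ) (hq : ENNReal.ofReal q = μ {ω | τ 1 ω < η 1 ω})
    (hq0 : 0 < q) (hq1 : q < 1)
    (ν : Ω → ℕ) (hν : ∀ ω, ν ω = sInf {n | 1 ≤ n ∧ τ n ω < η n ω})
    (S : Ω → ℝ) (hS : ∀ ω, S ω = ∑ i ∈ Finset.Icc 1 (ν ω), min (τ i ω) (η i ω)) :
    ∀ t ≥ (0:ℝ), μ {ω | t ≤ S ω} = ENNReal.ofReal (Real.exp (-lam * t)) := by
  -- basic measurability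
  set X : ℕ → Ω → ℝ × ℝ := fun i ω => (τ i ω, η i ω) with hX
  have hτm : ∀ i, Measurable (τ i) := fun i => measurable_fst.comp (hmeas i)
  have hηm : ∀ i, Measurable (η i) := fun i => measurable_snd.comp (hmeas i)
  -- rewrite S via fSum
  have hS' : ∀ ω, S ω = fSum (fun n => X n ω) := by
    intro ω; rw [hS, fSum]
    have : fIdx (fun n => X n ω) = ν ω := by rw [hν]; rfl
    rw [this]
  have mS : Measurable S := by
    have : S = fun ω => fSum (fun n => X n ω) := funext hS'
    rw [this]
    exact measurable_fSum.comp (measurable_pi_lambda _ hmeas)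
  set T : Ω → ℝ := fun ω => fSum (fun n => X (n + 1) ω) with hT
  have mT : Measurable T :=
    measurable_fSum.comp (measurable_pi_lambda _ (fun n => hmeas (n + 1)))
  set pS : ℝ → ℝ≥0∞ := fun u => μ {ω | u ≤ S ω} with hpS
  have hpS_anti : Antitone pS := by
    intro u v huv
    exact measure_mono (fun ω h => le_trans huv h)
  have hpS_meas : Measurable pS := hpS_anti.measurable
  have hpS_le_one : ∀ u, pS u ≤ 1 := fun u => prob_le_one
  have hpS_ne_top : ∀ u, pS u ≠ ⊤ := fun u => (lt_of_le_of_lt (hpS_le_one u) ENNReal.one_lt_top).ne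
  -- measures
  set ρτ : Measure ℝ := μ.map (τ 1) with hρτ
  set ρη : Measure ℝ := μ.map (η 1) with hρη
  haveI : IsProbabilityMeasure ρτ := Measure.isProbabilityMeasure_map (hτm 1).aemeasurable
  haveI : IsProbabilityMeasure ρη := Measure.isProbabilityMeasure_map (hηm 1).aemeasurable
  haveI : IsProbabilityMeasure (μ.map T) := Measure.isProbabilityMeasure_map mT.aemeasurable
  -- identically distributed: T ~ S
  have hTS : ∀ u : ℝ, μ {ω | u ≤ T ω} = pS u := by
    have hidY : μ.map (fun ω n => X n ω) = μ.map (fun ω n => X (n + 1) ω) :=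
      map_shift_eq μ X hmeas hindep hident
    have h1 : IdentDistrib (fun ω n => X n ω) (fun ω n => X (n + 1) ω) μ μ :=
      ⟨(measurable_pi_lambda _ hmeas).aemeasurable,
       (measurable_pi_lambda _ (fun n => hmeas (n + 1))).aemeasurable, hidY⟩
    have h2 : IdentDistrib (fSum ∘ fun ω n => X n ω) (fSum ∘ fun ω n => X (n + 1) ω) μ μ :=
      h1.comp measurable_fSum
    have hSe : S = fSum ∘ fun ω n => X n ω := funext hS'
    have hTe : T = fSum ∘ fun ω n => X (n + 1) ω := rfl
    intro u
    have h3 := h2.symm.measure_mem_eq (measurableSet_Ici (a := u))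
    rw [hpS, hSe, hTe]
    exact h3
  -- independence of X 1 and T
  have hindepT : IndepFun (X 1) T μ := by
    have hle : ∀ i : ℕ, MeasurableSpace.comap (X i) inferInstance ≤ _ :=
      fun i => (hmeas i).comap_le
    have hdisj : Disjoint ({1} : Set ℕ) {n : ℕ | 2 ≤ n} := by
      rw [Set.disjoint_left]
      rintro a ha ha2
      rw [Set.mem_singleton_iff] at ha
      rw [Set.mem_setOf_eq, ha] at ha2
      omega
    have hIndep2 := indep_iSup_of_disjoint hle hindep.iIndep hdisj
    have hL : MeasurableSpace.comap (X 1) inferInstance ≤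
        ⨆ i ∈ ({1} : Set ℕ), MeasurableSpace.comap (X i) inferInstance := by
      exact le_biSup (fun i : ℕ => MeasurableSpace.comap (X i) inferInstance) (Set.mem_singleton 1)
    have hTM : @Measurable Ω ℝ (⨆ i ∈ {n : ℕ | 2 ≤ n},
        MeasurableSpace.comap (X i) inferInstance) _ T := by
      set M := ⨆ i ∈ {n : ℕ | 2 ≤ n}, MeasurableSpace.comap (X i) inferInstance with hM
      have hY0 : @Measurable Ω (ℕ → ℝ × ℝ) M _
          (fun ω n => if 1 ≤ n then X (n + 1) ω else (0, 0)) := by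
        apply @measurable_pi_lambda Ω ℕ (fun _ => ℝ × ℝ) M _ _
        intro n
        by_cases hn : 1 ≤ n
        · simp only [if_pos hn]
          have hmem : (n + 1) ∈ {n : ℕ | 2 ≤ n} := by simp [Set.mem_setOf_eq]; omega
          exact measurable_iff_comap_le.mpr (le_biSup
            (fun i => MeasurableSpace.comap (X i) inferInstance) hmem)
        · simp only [if_neg hn]
          exact measurable_const
      have hTe2 : T = fSum ∘ (fun ω n => if 1 ≤ n then X (n + 1) ω else (0, 0)) := by
        funext ω
        exact (fSum_congr (fun n hn => by simp [if_pos hn])).symm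
      rw [hTe2]
      exact measurable_fSum.comp hY0
    have hR2 : MeasurableSpace.comap T inferInstance ≤
        ⨆ i ∈ {n : ℕ | 2 ≤ n}, MeasurableSpace.comap (X i) inferInstance :=
      measurable_iff_comap_le.mp hTM
    exact indep_of_indep_of_le_right (indep_of_indep_of_le_left hIndep2 hL) hR2
  have hmapWT : μ.map (fun ω => (X 1 ω, T ω)) = (μ.map (X 1)).prod (μ.map T) :=
    (indepFun_iff_map_prod_eq_prod_map_map (hmeas 1).aemeasurable mT.aemeasurable).mp hindepT
  -- product structure of the law of X 1
  have hρ : μ.map (X 1) = ρτ.prod ρη :=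
    (indepFun_iff_map_prod_eq_prod_map_map (hτm 1).aemeasurable
      (hηm 1).aemeasurable).mp (hpair 1)
  -- CDF facts
  have hexp_le_one : ∀ u : ℝ, 0 ≤ u → Real.exp (-lam * u) ≤ 1 := by
    intro u hu
    rw [← Real.exp_zero]
    apply Real.exp_le_exp.mpr
    nlinarith
  have hone_le_exp : ∀ u : ℝ, u ≤ 0 → 1 ≤ Real.exp (-lam * u) := by
    intro u hu
    rw [← Real.exp_zero]
    apply Real.exp_le_exp.mpr
    nlinarith
  have hIci : ∀ y : ℝ, 0 ≤ y → ρτ (Set.Ici y) = ENNReal.ofReal (Real.exp (-lam * y)) := by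
    intro y hy
    rw [hρτ, Measure.map_apply (hτm 1) measurableSet_Ici]
    have hpre : τ 1 ⁻¹' Set.Ici y = {ω | τ 1 ω < y}ᶜ := by
      ext ω; simp [not_lt]
    rw [hpre, measure_compl (measurableSet_lt (hτm 1) measurable_const) (measure_ne_top μ _),
      measure_univ, hτ 1 y hy, ← ENNReal.ofReal_one,
      ← ENNReal.ofReal_sub _ (by linarith [hexp_le_one y hy])]
    congr 1
    ring
  have hIco1 : ∀ u y : ℝ, 0 ≤ u → u ≤ y →
      ρτ (Set.Ico u y) = ENNReal.ofReal (Real.exp (-lam * u) - Real.exp (-lam * y)) := by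
    intro u y hu huy
    have h1 : Set.Ico u y = Set.Ici u \ Set.Ici y := by
      ext x
      simp only [Set.mem_Ico, Set.mem_diff, Set.mem_Ici, not_le]
    rw [h1, measure_diff (Set.Ici_subset_Ici.mpr huy) measurableSet_Ici.nullMeasurableSet
      (measure_ne_top _ _), hIci u hu, hIci y (le_trans hu huy),
      ← ENNReal.ofReal_sub _ (Real.exp_pos _).le]
  have hae_pos : ∀ᵐ y ∂ρη, 0 ≤ y := by
    rw [hρη, ae_map_iff (hηm 1).aemeasurable measurableSet_Ici]
    exact hηpos 1
  -- a.e. nonnegativity of S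
  have hSnn : ∀ᵐ ω ∂μ, 0 ≤ S ω := by
    have hτ0 : ∀ i, ∀ᵐ ω ∂μ, 0 ≤ τ i ω := by
      intro i
      have h0 : μ {ω | τ i ω < 0} = 0 := by
        simpa using hτ i 0 le_rfl
      rw [ae_iff]
      convert h0 using 2
      ext ω
      simp [not_le]
    have hall : ∀ᵐ ω ∂μ, ∀ i, 0 ≤ τ i ω ∧ 0 ≤ η i ω :=
      ae_all_iff.mpr fun i => (hτ0 i).and (hηpos i)
    filter_upwards [hall] with ω hω
    rw [hS ω]
    exact Finset.sum_nonneg fun i _ => le_min (hω i).1 (hω i).2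
  -- the key recursion for pS
  have hrec : ∀ u : ℝ, pS u = (∫⁻ y, ρτ (Set.Ico u y) ∂ρη) +
      ∫⁻ y, ρτ (Set.Ici y) * pS (u - y) ∂ρη := by
    intro u
    set A1 : Set Ω := {ω | τ 1 ω < η 1 ω ∧ u ≤ τ 1 ω} with hA1
    set A2 : Set Ω := {ω | ¬(τ 1 ω < η 1 ω) ∧ u ≤ η 1 ω + T ω} with hA2
    have hA1m : MeasurableSet A1 :=
      (measurableSet_lt (hτm 1) (hηm 1)).inter (measurableSet_le measurable_const (hτm 1))
    have hA2m : MeasurableSet A2 :=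
      ((measurableSet_lt (hτm 1) (hηm 1)).compl).inter
        (measurableSet_le measurable_const ((hηm 1).add mT))
    -- the event that there is never a success is null
    have hNnull : μ {ω | ∀ n, 1 ≤ n → ¬(τ n ω < η n ω)} = 0 := by
      set NN := {ω | ∀ n, 1 ≤ n → ¬(τ n ω < η n ω)} with hNN
      have h1q : (0:ℝ) ≤ 1 - q := by linarith
      have hfac : ∀ i : ℕ, μ (X i ⁻¹' {p : ℝ × ℝ | p.1 < p.2}ᶜ) = ENNReal.ofReal (1 - q) := by
        intro i
        rw [(hident i 1).measure_mem_eq (measurableSet_lt measurable_fst measurable_snd).compl]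
        have h2 : (fun ω => (τ 1 ω, η 1 ω)) ⁻¹' {p : ℝ × ℝ | p.1 < p.2}ᶜ =
            {ω | τ 1 ω < η 1 ω}ᶜ := rfl
        rw [h2, measure_compl (measurableSet_lt (hτm 1) (hηm 1)) (measure_ne_top μ _),
          measure_univ, ← hq, ← ENNReal.ofReal_one, ← ENNReal.ofReal_sub _ hq0.le]
      have hbound : ∀ n : ℕ, μ NN ≤ ENNReal.ofReal ((1 - q) ^ n) := by
        intro n
        have hsub : NN ⊆ ⋂ i ∈ Finset.Icc 1 n, X i ⁻¹' {p : ℝ × ℝ | p.1 < p.2}ᶜ := by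
          intro ω hω
          simp only [Set.mem_iInter]
          intro i hi
          exact hω i (Finset.mem_Icc.mp hi).1
        refine le_trans (measure_mono hsub) ?_
        rw [hindep.measure_inter_preimage_eq_mul (Finset.Icc 1 n)
          (fun i _ => (measurableSet_lt measurable_fst measurable_snd).compl)]
        rw [Finset.prod_congr rfl (fun i _ => hfac i), Finset.prod_const, Nat.card_Icc,
          ENNReal.ofReal_pow h1q]
        simp
      have htR : ∀ n : ℕ, (μ NN).toReal ≤ (1 - q) ^ n := by
        intro n
        calc (μ NN).toReal ≤ (ENNReal.ofReal ((1 - q) ^ n)).toReal :=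
              ENNReal.toReal_mono ENNReal.ofReal_ne_top (hbound n)
          _ = (1 - q) ^ n := ENNReal.toReal_ofReal (pow_nonneg h1q n)
      have h0 : (μ NN).toReal ≤ 0 :=
        ge_of_tendsto (tendsto_pow_atTop_nhds_zero_of_lt_one h1q (by linarith))
          (Filter.Eventually.of_forall htR)
      have h0' : (μ NN).toReal = 0 := le_antisymm h0 ENNReal.toReal_nonneg
      rcases (ENNReal.toReal_eq_zero_iff _).mp h0' with h | h
      · exact h
      · exact absurd h (measure_ne_top μ _)
    -- decomposition
    have hdec : μ {ω | u ≤ S ω} = μ A1 + μ A2 := by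
      have hNae : ∀ᵐ ω ∂μ, ¬ (∀ n, 1 ≤ n → ¬(τ n ω < η n ω)) := by
        rw [ae_iff]
        simp only [not_not]
        exact hNnull
      have hae : ({ω | u ≤ S ω} : Set Ω) =ᵐ[μ] ((A1 ∪ A2 : Set Ω)) := by
        rw [Filter.eventuallyEq_set]
        filter_upwards [hNae] with ω hω
        push_neg at hω
        obtain ⟨n0, hn01, hc0⟩ := hω
        by_cases hc : τ 1 ω < η 1 ω
        · have hSω : S ω = τ 1 ω := by
            rw [hS' ω]
            exact fSum_one hc
          simp only [Set.mem_setOf_eq, Set.mem_union, hA1, hA2]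
          constructor
          · intro h
            exact Or.inl ⟨hc, hSω ▸ h⟩
          · rintro (⟨_, h⟩ | ⟨h, _⟩)
            · rw [hSω]; exact h
            · exact absurd hc h
        · have hn2 : 2 ≤ n0 := by
            rcases Nat.eq_or_lt_of_le hn01 with h | h
            · exfalso; rw [← h] at hc0; exact hc hc0
            · omega
          have hSω : S ω = η 1 ω + T ω := by
            rw [hS' ω]
            exact fSum_rec hc ⟨n0, hn2, hc0⟩
          simp only [Set.mem_setOf_eq, Set.mem_union, hA1, hA2]
          constructor
          · intro h
            exact Or.inr ⟨hc, hSω ▸ h⟩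
          · rintro (⟨h, _⟩ | ⟨_, h⟩)
            · exact absurd h hc
            · rw [hSω]; exact h
      have hdisj : Disjoint A1 A2 :=
        Set.disjoint_left.mpr (fun ω h1 h2 => h2.1 h1.1)
      rw [measure_congr hae, measure_union hdisj hA2m]
    -- first piece
    have hμA1 : μ A1 = ∫⁻ y, ρτ (Set.Ico u y) ∂ρη := by
      have hset : MeasurableSet {p : ℝ × ℝ | p.1 < p.2 ∧ u ≤ p.1} :=
        (measurableSet_lt measurable_fst measurable_snd).inter
          (measurableSet_le measurable_const measurable_fst)
      have h1 : A1 = X 1 ⁻¹' {p : ℝ × ℝ | p.1 < p.2 ∧ u ≤ p.1} := rfl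
      rw [h1, ← Measure.map_apply (hmeas 1) hset, hρ, Measure.prod_apply_symm hset]
      apply lintegral_congr
      intro y
      congr 1
      ext x
      simp only [Set.mem_preimage, Set.mem_setOf_eq, Set.mem_Ico]
      exact and_comm
    -- second piece
    have hμA2 : μ A2 = ∫⁻ y, ρτ (Set.Ici y) * pS (u - y) ∂ρη := by
      set U : Set ((ℝ × ℝ) × ℝ) := {zs | ¬(zs.1.1 < zs.1.2) ∧ u ≤ zs.1.2 + zs.2} with hU
      have hUm : MeasurableSet U :=
        ((measurableSet_lt (measurable_fst.comp measurable_fst)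
          (measurable_snd.comp measurable_fst)).compl).inter
          (measurableSet_le measurable_const
            ((measurable_snd.comp measurable_fst).add measurable_snd))
      have hpm : Measurable (fun ω => (X 1 ω, T ω)) := (hmeas 1).prodMk mT
      have h1 : A2 = (fun ω => (X 1 ω, T ω)) ⁻¹' U := rfl
      rw [h1, ← Measure.map_apply hpm hUm, hmapWT, Measure.prod_apply hUm]
      have hslice : ∀ xy : ℝ × ℝ, (μ.map T) (Prod.mk xy ⁻¹' U) =
          Set.indicator {p : ℝ × ℝ | p.1 < p.2}ᶜ (fun p => pS (u - p.2)) xy := by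
        intro xy
        by_cases hc : xy.1 < xy.2
        · have he : Prod.mk xy ⁻¹' U = ∅ := by
            ext s
            simp only [Set.mem_preimage, hU, Set.mem_setOf_eq, Set.mem_empty_iff_false,
              iff_false, not_and]
            intro h1
            exact absurd hc h1
          rw [he, measure_empty, Set.indicator_of_notMem ((Set.notMem_compl_iff (s := {p : ℝ × ℝ | p.1 < p.2})).mpr hc)]
        · have he : Prod.mk xy ⁻¹' U = Set.Ici (u - xy.2) := by
            ext s
            simp only [Set.mem_preimage, hU, Set.mem_setOf_eq, hc, not_false_iff, true_and,
              Set.mem_Ici]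
            exact sub_le_iff_le_add'.symm
          rw [he, Measure.map_apply mT measurableSet_Ici]
          have h5 : T ⁻¹' Set.Ici (u - xy.2) = {ω | u - xy.2 ≤ T ω} := rfl
          rw [h5, hTS, Set.indicator_of_mem (Set.mem_compl (s := {p : ℝ × ℝ | p.1 < p.2}) hc)]
      have hA2eq : (∫⁻ xy, (μ.map T) (Prod.mk xy ⁻¹' U) ∂(μ.map (X 1))) =
          ∫⁻ xy, Set.indicator ({p : ℝ × ℝ | p.1 < p.2}ᶜ) (fun p => pS (u - p.2)) xy
            ∂(μ.map (X 1)) := lintegral_congr hslice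
      rw [hA2eq, hρ]
      have hfm : Measurable (Set.indicator ({p : ℝ × ℝ | p.1 < p.2}ᶜ)
          (fun p => pS (u - p.2))) :=
        (hpS_meas.comp (measurable_const.sub measurable_snd)).indicator
          (measurableSet_lt measurable_fst measurable_snd).compl
      rw [lintegral_prod_symm (fun z => Set.indicator ({p : ℝ × ℝ | p.1 < p.2}ᶜ)
        (fun p => pS (u - p.2)) z) hfm.aemeasurable]
      apply lintegral_congr
      intro y
      have hpt : ∀ x : ℝ, Set.indicator ({p : ℝ × ℝ | p.1 < p.2}ᶜ)
          (fun p => pS (u - p.2)) (x, y) =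
          Set.indicator (Set.Ici y) (fun _ => pS (u - y)) x := by
        intro x
        by_cases hxy : y ≤ x
        · rw [Set.indicator_of_mem (Set.mem_compl (s := {p : ℝ × ℝ | p.1 < p.2})
              (not_lt.mpr hxy)),
            Set.indicator_of_mem (show x ∈ Set.Ici y from hxy)]
        · rw [Set.indicator_of_notMem ((Set.notMem_compl_iff
              (s := {p : ℝ × ℝ | p.1 < p.2})).mpr (lt_of_not_ge hxy)),
            Set.indicator_of_notMem (show x ∉ Set.Ici y from fun h => hxy h)]
      rw [lintegral_congr hpt, lintegral_indicator_const measurableSet_Ici, mul_comm]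
      
    exact hdec.trans (by rw [hμA1, hμA2])
  -- Q function
  set qr : ℝ → ℝ := fun u => min 1 (Real.exp (-lam * u)) with hqr
  set Q : ℝ → ℝ≥0∞ := fun u => ENNReal.ofReal (qr u) with hQ
  have hqr0 : ∀ u, 0 ≤ qr u := fun u => le_min one_pos.le (Real.exp_pos _).le
  have hqr1 : ∀ u, qr u ≤ 1 := fun u => min_le_left _ _
  have hQmeas : Measurable Q := by
    apply ENNReal.measurable_ofReal.comp
    exact (measurable_const.min ((Real.continuous_exp.measurable).comp
      (measurable_const.mul measurable_id)))
  -- measurability of integrands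
  have hIci_meas : Measurable (fun y => ρτ (Set.Ici y)) := by
    have : Antitone (fun y => ρτ (Set.Ici y)) :=
      fun a b hab => measure_mono (Set.Ici_subset_Ici.mpr hab)
    exact this.measurable
  have hIco_meas : ∀ u : ℝ, Measurable (fun y => ρτ (Set.Ico u y)) := by
    intro u
    have : Monotone (fun y => ρτ (Set.Ico u y)) :=
      fun a b hab => measure_mono (Set.Ico_subset_Ico_right hab)
    exact this.measurable
  -- recursion for Q
  have hrecQ : ∀ u : ℝ, 0 ≤ u → Q u = (∫⁻ y, ρτ (Set.Ico u y) ∂ρη) +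
      ∫⁻ y, ρτ (Set.Ici y) * Q (u - y) ∂ρη := by
    intro u hu
    rw [← lintegral_add_left (hIco_meas u)]
    have hpt : ∀ᵐ y ∂ρη, ρτ (Set.Ico u y) + ρτ (Set.Ici y) * Q (u - y) = Q u := by
      filter_upwards [hae_pos] with y hy
      have hQu : Q u = ENNReal.ofReal (Real.exp (-lam * u)) := by
        simp only [hQ, hqr, min_eq_right (hexp_le_one u hu)]
      by_cases hyu : u ≤ y
      · rw [hIco1 u y hu hyu, hIci y hy]
        have hQ1 : Q (u - y) = 1 := by
          have h1 : 1 ≤ Real.exp (-lam * (u - y)) := hone_le_exp (u - y) (by linarith)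
          simp only [hQ, hqr, min_eq_left h1, ENNReal.ofReal_one]
        have hmono : Real.exp (-lam * y) ≤ Real.exp (-lam * u) :=
          Real.exp_le_exp.mpr (by nlinarith)
        rw [hQ1, mul_one, ← ENNReal.ofReal_add (by linarith) (Real.exp_pos _).le, hQu]
        congr 1
        ring
      · push_neg at hyu
        rw [Set.Ico_eq_empty (by exact fun h => absurd h (not_lt.mpr hyu.le)), measure_empty,
          zero_add, hIci y hy]
        have hQuy : Q (u - y) = ENNReal.ofReal (Real.exp (-lam * (u - y))) := by
          simp only [hQ, hqr, min_eq_right (hexp_le_one (u - y) (by linarith))]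
        rw [hQuy, ← ENNReal.ofReal_mul (Real.exp_pos _).le, ← Real.exp_add, hQu]
        congr 1
        ring
    rw [lintegral_congr_ae hpt, lintegral_const, measure_univ, mul_one]
  -- the weight
  have hR : (∫⁻ y, ρτ (Set.Ici y) ∂ρη) = ENNReal.ofReal (1 - q) := by
    have hset : MeasurableSet {p : ℝ × ℝ | p.2 ≤ p.1} := measurableSet_le measurable_snd measurable_fst
    have h1 : (ρτ.prod ρη) {p : ℝ × ℝ | p.2 ≤ p.1} = ∫⁻ y, ρτ (Set.Ici y) ∂ρη := by
      rw [Measure.prod_apply_symm hset]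
      apply lintegral_congr
      intro y
      congr 1
    rw [← h1, ← hρ, Measure.map_apply (hmeas 1) hset]
    have h2 : (fun ω => (τ 1 ω, η 1 ω)) ⁻¹' {p : ℝ × ℝ | p.2 ≤ p.1} = {ω | τ 1 ω < η 1 ω}ᶜ := by
      ext ω
      simp [not_lt]
    rw [h2, measure_compl (measurableSet_lt (hτm 1) (hηm 1)) (measure_ne_top μ _),
      measure_univ, ← hq, ← ENNReal.ofReal_one, ← ENNReal.ofReal_sub _ hq0.le]
  -- measurability of integrands
  -- iteration
  have hQ_le_one : ∀ u, Q u ≤ 1 := fun u => ENNReal.ofReal_le_one.mpr (hqr1 u)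
  have hiter : ∀ n : ℕ, ∀ u : ℝ, |(pS u).toReal - qr u| ≤ (1 - q) ^ n := by
    intro n
    induction n with
    | zero =>
      intro u
      have h1 : (pS u).toReal ≤ 1 := by
        rw [← ENNReal.toReal_one]
        exact ENNReal.toReal_mono ENNReal.one_ne_top (hpS_le_one u)
      have h2 : (0:ℝ) ≤ (pS u).toReal := ENNReal.toReal_nonneg
      rw [pow_zero, abs_le]
      constructor
      · linarith [hqr1 u]
      · linarith [hqr0 u]
    | succ n ih =>
      intro u
      rcases lt_or_ge u 0 with hu | hu
      · have hp1 : pS u = 1 := by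
          have hae1 : ({ω | u ≤ S ω} : Set Ω) =ᵐ[μ] (Set.univ : Set Ω) := by
            rw [Filter.eventuallyEq_set]
            filter_upwards [hSnn] with ω hω
            simp only [Set.mem_setOf_eq, Set.mem_univ, iff_true]
            linarith
          show μ {ω | u ≤ S ω} = 1
          rw [measure_congr hae1, measure_univ]
        have hqu1 : qr u = 1 := min_eq_left (hone_le_exp u hu.le)
        rw [hp1, hqu1]
        simp only [ENNReal.toReal_one, sub_self, abs_zero]
        exact pow_nonneg (by linarith) _
      · set c := (1 - q) ^ n with hc
        have h1q : (0:ℝ) ≤ 1 - q := by linarith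
        have hc0 : 0 ≤ c := pow_nonneg h1q n
        have hP1 : ∀ s : ℝ, pS s ≤ Q s + ENNReal.ofReal c := by
          intro s
          have h := abs_le.mp (ih s)
          have h2 : (pS s).toReal ≤ qr s + c := by linarith [h.2]
          calc pS s = ENNReal.ofReal ((pS s).toReal) :=
                (ENNReal.ofReal_toReal (hpS_ne_top s)).symm
            _ ≤ ENNReal.ofReal (qr s + c) := ENNReal.ofReal_le_ofReal h2
            _ = Q s + ENNReal.ofReal c := ENNReal.ofReal_add (hqr0 s) hc0
        have hP2 : ∀ s : ℝ, Q s ≤ pS s + ENNReal.ofReal c := by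
          intro s
          have h := abs_le.mp (ih s)
          have h2 : qr s ≤ (pS s).toReal + c := by linarith [h.1]
          calc Q s ≤ ENNReal.ofReal ((pS s).toReal + c) := ENNReal.ofReal_le_ofReal h2
            _ = ENNReal.ofReal ((pS s).toReal) + ENNReal.ofReal c :=
                ENNReal.ofReal_add ENNReal.toReal_nonneg hc0
            _ = pS s + ENNReal.ofReal c := by rw [ENNReal.ofReal_toReal (hpS_ne_top s)]
        set A := ∫⁻ y, ρτ (Set.Ico u y) ∂ρη with hA
        set IP := ∫⁻ y, ρτ (Set.Ici y) * pS (u - y) ∂ρη with hIP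
        set IQ := ∫⁻ y, ρτ (Set.Ici y) * Q (u - y) ∂ρη with hIQ
        have hrecu : pS u = A + IP := hrec u
        have hrecQu : Q u = A + IQ := hrecQ u hu
        have hAfin : A ≠ ⊤ := by
          have h1 : A ≤ pS u := by rw [hrecu]; exact le_self_add
          exact (lt_of_le_of_lt (le_trans h1 (hpS_le_one u)) ENNReal.one_lt_top).ne
        have hIPfin : IP ≠ ⊤ := by
          have h1 : IP ≤ pS u := by rw [hrecu]; exact le_add_self
          exact (lt_of_le_of_lt (le_trans h1 (hpS_le_one u)) ENNReal.one_lt_top).ne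
        have hIQfin : IQ ≠ ⊤ := by
          have h1 : IQ ≤ Q u := by rw [hrecQu]; exact le_add_self
          exact (lt_of_le_of_lt (le_trans h1 (hQ_le_one u)) ENNReal.one_lt_top).ne
        have hIQmeas : Measurable fun y => ρτ (Set.Ici y) * Q (u - y) :=
          hIci_meas.mul (hQmeas.comp (measurable_const.sub measurable_id))
        have hIPmeas : Measurable fun y => ρτ (Set.Ici y) * pS (u - y) :=
          hIci_meas.mul (hpS_meas.comp (measurable_const.sub measurable_id))
        have hcc0 : (0:ℝ) ≤ c * (1 - q) := mul_nonneg hc0 h1q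
        have key1 : IP ≤ IQ + ENNReal.ofReal (c * (1 - q)) := by
          have step : ∀ y : ℝ, ρτ (Set.Ici y) * pS (u - y) ≤
              ρτ (Set.Ici y) * Q (u - y) + ρτ (Set.Ici y) * ENNReal.ofReal c := by
            intro y
            rw [← mul_add]
            exact mul_le_mul_right (hP1 _) _
          calc IP ≤ ∫⁻ y, (ρτ (Set.Ici y) * Q (u - y) + ρτ (Set.Ici y) * ENNReal.ofReal c) ∂ρη :=
                lintegral_mono step
            _ = IQ + ∫⁻ y, ρτ (Set.Ici y) * ENNReal.ofReal c ∂ρη := lintegral_add_left hIQmeas _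
            _ = IQ + (∫⁻ y, ρτ (Set.Ici y) ∂ρη) * ENNReal.ofReal c := by
                rw [lintegral_mul_const _ hIci_meas]
            _ = IQ + ENNReal.ofReal (c * (1 - q)) := by
                rw [hR, ← ENNReal.ofReal_mul h1q, mul_comm (1 - q) c]
        have key2 : IQ ≤ IP + ENNReal.ofReal (c * (1 - q)) := by
          have step : ∀ y : ℝ, ρτ (Set.Ici y) * Q (u - y) ≤
              ρτ (Set.Ici y) * pS (u - y) + ρτ (Set.Ici y) * ENNReal.ofReal c := by
            intro y
            rw [← mul_add]
            exact mul_le_mul_right (hP2 _) _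
          calc IQ ≤ ∫⁻ y, (ρτ (Set.Ici y) * pS (u - y) + ρτ (Set.Ici y) * ENNReal.ofReal c) ∂ρη :=
                lintegral_mono step
            _ = IP + ∫⁻ y, ρτ (Set.Ici y) * ENNReal.ofReal c ∂ρη := lintegral_add_left hIPmeas _
            _ = IP + (∫⁻ y, ρτ (Set.Ici y) ∂ρη) * ENNReal.ofReal c := by
                rw [lintegral_mul_const _ hIci_meas]
            _ = IP + ENNReal.ofReal (c * (1 - q)) := by
                rw [hR, ← ENNReal.ofReal_mul h1q, mul_comm (1 - q) c]
        have htp : (pS u).toReal = A.toReal + IP.toReal := by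
          rw [hrecu, ENNReal.toReal_add hAfin hIPfin]
        have htq : qr u = A.toReal + IQ.toReal := by
          have h1 : (Q u).toReal = qr u := ENNReal.toReal_ofReal (hqr0 u)
          rw [← h1, hrecQu, ENNReal.toReal_add hAfin hIQfin]
        have hk1 : IP.toReal ≤ IQ.toReal + c * (1 - q) := by
          have h1 := ENNReal.toReal_mono (by
            exact ENNReal.add_ne_top.mpr ⟨hIQfin, ENNReal.ofReal_ne_top⟩) key1
          rwa [ENNReal.toReal_add hIQfin ENNReal.ofReal_ne_top,
            ENNReal.toReal_ofReal hcc0] at h1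
        have hk2 : IQ.toReal ≤ IP.toReal + c * (1 - q) := by
          have h1 := ENNReal.toReal_mono (by
            exact ENNReal.add_ne_top.mpr ⟨hIPfin, ENNReal.ofReal_ne_top⟩) key2
          rwa [ENNReal.toReal_add hIPfin ENNReal.ofReal_ne_top,
            ENNReal.toReal_ofReal hcc0] at h1
        rw [abs_le, pow_succ]
        constructor
        · rw [htp, htq]; nlinarith
        · rw [htp, htq]; nlinarith
  -- conclusion
  intro t ht
  have hzero : |(pS t).toReal - qr t| = 0 := by
    have htend : Filter.Tendsto (fun n : ℕ => (1 - q) ^ n) Filter.atTop (nhds 0) :=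
      tendsto_pow_atTop_nhds_zero_of_lt_one (by linarith) (by linarith)
    have hle : |(pS t).toReal - qr t| ≤ 0 :=
      ge_of_tendsto htend (Filter.Eventually.of_forall (fun n => hiter n t))
    exact le_antisymm hle (abs_nonneg _)
  have heq : (pS t).toReal = qr t := by
    have := abs_eq_zero.mp hzero
    linarith
  have hqrt : qr t = Real.exp (-lam * t) := min_eq_right (hexp_le_one t ht)
  calc μ {ω | t ≤ S ω} = pS t := rfl
    _ = ENNReal.ofReal ((pS t).toReal) := (ENNReal.ofReal_toReal (hpS_ne_top t)).symm
    _ = ENNReal.ofReal (Real.exp (-lam * t)) := by rw [heq, hqrt]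
end

section
/- In the Geiger–Muller counter model with Poisson input of intensity λ and i.i.d. locking times with distribution G, let T be the time during which the counter loses no particles. Then the Laplace transform of T is φ(z) = λ(1 − φ_G(z+λ)) / (z + λ(1 − φ_G(z+λ))), where φ_G(z) = ∫_0^∞ e^{−zt} dG(t). -/
open MeasureTheory ProbabilityTheory Real Set Filter
open scoped NNReal ENNReal

noncomputable def gfun (w : ℝ) : ℝ × ℝ → ℝ := fun p => if p.1 < p.2 then 0 else Real.exp (-(w * p.1))
noncomputable def hfun (w : ℝ) : ℝ × ℝ → ℝ := fun p => if p.1 < p.2 then Real.exp (-(w * p.1)) else 0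

lemma gfun_meas (w : ℝ) : Measurable (gfun w) :=
  Measurable.ite (measurableSet_lt measurable_fst measurable_snd) measurable_const
    ((measurable_fst.const_mul w).neg.exp)

lemma hfun_meas (w : ℝ) : Measurable (hfun w) :=
  Measurable.ite (measurableSet_lt measurable_fst measurable_snd)
    ((measurable_fst.const_mul w).neg.exp) measurable_const


lemma aux_int_exp {b : ℝ} (hb : 0 < b) (c : ℝ) :
    ∫ x in Ioi c, Real.exp (-(b * x)) = Real.exp (-(b * c)) / b := by
  have h := integral_comp_mul_left_Ioi (fun y => Real.exp (-y)) c hb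
  simp only [smul_eq_mul] at h
  rw [h, integral_exp_neg_Ioi]
  field_simp

lemma aux_meas_comp {Ω : Type*} [MeasurableSpace Ω] {F : ℕ → Ω → ℝ}
    (hF : ∀ n, Measurable (F n)) {g : Ω → ℕ} (hg : Measurable g) :
    Measurable fun ω => F (g ω) ω := by
  have h : Measurable fun p : Ω × ℕ => F p.2 p.1 :=
    measurable_from_prod_countable_left (fun n => hF n)
  exact h.comp (measurable_id.prodMk hg)

lemma aux_integral_prod {Ω : Type*} [MeasurableSpace Ω] {μ : Measure Ω} [IsProbabilityMeasure μ]
    {Y : ℕ → Ω → ℝ}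
    (hi : iIndepFun Y μ)
    (hm : ∀ k, Measurable (Y k))
    (hb : ∀ k, ∀ᵐ ω ∂μ, |Y k ω| ≤ 1) (s : Finset ℕ) :
    (∫ ω, ∏ k ∈ s, Y k ω ∂μ) = ∏ k ∈ s, ∫ ω, Y k ω ∂μ := by
  classical
  induction s using Finset.cons_induction with
  | empty => simp
  | cons a s ha ih =>
    have hprodb : ∀ᵐ ω ∂μ, |∏ k ∈ s, Y k ω| ≤ 1 := by
      filter_upwards [ae_all_iff.2 hb] with ω hω
      calc |∏ k ∈ s, Y k ω| = ∏ k ∈ s, |Y k ω| := by rw [Finset.abs_prod]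
        _ ≤ ∏ k ∈ s, 1 := Finset.prod_le_prod (fun i _ => abs_nonneg _) (fun i _ => hω i)
        _ = 1 := by simp
    have hint : ∀ k, Integrable (Y k) μ := fun k =>
      Integrable.mono' (integrable_const 1) (hm k).aestronglyMeasurable
        (by filter_upwards [hb k] with ω h using by simpa [Real.norm_eq_abs] using h)
    have hprodm : Measurable (∏ k ∈ s, Y k) := by
      rw [show (∏ k ∈ s, Y k) = fun ω => ∏ k ∈ s, Y k ω from funext fun ω => by
        simp [Finset.prod_apply]]
      exact Finset.measurable_prod s fun i _ => hm i
    have hprodint : Integrable (∏ k ∈ s, Y k) μ :=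
      Integrable.mono' (integrable_const 1) hprodm.aestronglyMeasurable
        (by
          filter_upwards [hprodb] with ω h
          rw [Finset.prod_apply, Real.norm_eq_abs]
          exact h)
    have hI : IndepFun (Y a) (∏ k ∈ s, Y k) μ :=
      (hi.indepFun_finsetProd_of_notMem hm ha).symm
    have := hI.integral_mul_eq_mul_integral (hint a).aestronglyMeasurable hprodint.aestronglyMeasurable
    simp only [Finset.prod_cons]
    calc (∫ ω, Y a ω * ∏ k ∈ s, Y k ω ∂μ)
        = ∫ ω, (Y a * ∏ k ∈ s, Y k) ω ∂μ := by
          congr 1; funext ω; simp [Finset.prod_apply]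
      _ = (∫ ω, Y a ω ∂μ) * ∫ ω, (∏ k ∈ s, Y k) ω ∂μ := this
      _ = (∫ ω, Y a ω ∂μ) * ∫ ω, ∏ k ∈ s, Y k ω ∂μ := by
          congr 1; congr 1; funext ω; simp [Finset.prod_apply]
      _ = (∫ ω, Y a ω ∂μ) * ∏ k ∈ s, ∫ ω, Y k ω ∂μ := by rw [ih]

lemma aux_exp_integral {lam : ℝ} (hlam : 0 < lam) (f : ℝ → ℝ) :
    ∫ x, f x ∂(expMeasure lam) = ∫ x in Ioi 0, lam * Real.exp (-(lam * x)) * f x := by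
  have hpdf : ∀ x, exponentialPDFReal lam x = if 0 ≤ x then lam * Real.exp (-(lam * x)) else 0 := by
    intro x
    simp [exponentialPDFReal, gammaPDFReal, Real.Gamma_one, Real.rpow_one, Real.rpow_zero,
      sub_self]
  have hwd : expMeasure lam
      = MeasureTheory.volume.withDensity
        (fun x => ((Real.toNNReal (exponentialPDFReal lam x) : ℝ≥0) : ℝ≥0∞)) := rfl
  rw [hwd, integral_withDensity_eq_integral_smul
    ((measurable_exponentialPDFReal lam).real_toNNReal) f]
  have h1 : (fun x => Real.toNNReal (exponentialPDFReal lam x) • f x)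
      = Set.indicator (Ici 0) (fun x => lam * Real.exp (-(lam * x)) * f x) := by
    funext x
    rw [NNReal.smul_def, Real.coe_toNNReal', hpdf]
    by_cases h : 0 ≤ x
    · have : 0 ≤ lam * Real.exp (-(lam * x)) := by positivity
      simp [Set.indicator_apply, h, max_eq_left this]
    · simp [Set.indicator_apply, h]
  rw [h1, integral_indicator measurableSet_Ici, integral_Ici_eq_integral_Ioi]

lemma aux_law_exp {Ω : Type*} [MeasurableSpace Ω] (μ : Measure Ω) [IsProbabilityMeasure μ]
    {lam : ℝ} (hlam : 0 < lam) {X : Ω → ℝ} (hX : Measurable X)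
    (hcdf : ∀ t ≥ (0:ℝ), μ {ω | X ω < t} = ENNReal.ofReal (1 - Real.exp (-lam * t))) :
    Measure.map X μ = expMeasure lam := by
  haveI : IsProbabilityMeasure (expMeasure lam) := isProbabilityMeasure_expMeasure hlam
  haveI : IsProbabilityMeasure (Measure.map X μ) := Measure.isProbabilityMeasure_map hX.aemeasurable
  refine Measure.ext_of_Iic (Measure.map X μ) (expMeasure lam) (fun t => ?_)
  have hzero : μ {ω | X ω < 0} = 0 := by
    have := hcdf 0 le_rfl
    simpa using this
  have hexp : expMeasure lam (Iic t) = ENNReal.ofReal (if 0 ≤ t then 1 - Real.exp (-(lam * t)) else 0) := by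
    rw [← ofReal_cdf (expMeasure lam) t]
    congr 1
    have := cdf_expMeasure_eq hlam t
    exact this
  rw [Measure.map_apply hX measurableSet_Iic, hexp]
  by_cases ht : 0 ≤ t
  · rw [if_pos ht]
    -- limit argument
    set s : ℕ → Set Ω := fun n => {ω | X ω < t + ((n : ℝ) + 1)⁻¹} with hs
    have hse : X ⁻¹' Iic t = ⋂ n, s n := by
      ext ω
      simp only [mem_preimage, mem_Iic, mem_iInter, hs, mem_setOf_eq]
      constructor
      · intro h n
        have : (0:ℝ) < ((n : ℝ) + 1)⁻¹ := by positivity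
        linarith
      · intro h
        by_contra hlt
        push_neg at hlt
        obtain ⟨n, hn⟩ := exists_nat_one_div_lt (sub_pos.mpr hlt)
        have := h n
        rw [one_div] at hn
        linarith
    have hmono : Antitone s := by
      intro n m hnm ω hω
      simp only [hs, mem_setOf_eq] at hω ⊢
      have hnm' : (n : ℝ) ≤ (m : ℝ) := Nat.cast_le.mpr hnm
      have : ((m : ℝ) + 1)⁻¹ ≤ ((n : ℝ) + 1)⁻¹ := by
        apply inv_anti₀ (by positivity)
        linarith
      linarith
    have hsm : ∀ n, NullMeasurableSet (s n) μ :=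
      fun n => (hX measurableSet_Iio).nullMeasurableSet
    have htend := tendsto_measure_iInter_atTop hsm hmono ⟨0, measure_ne_top μ _⟩
    have hval : ∀ n : ℕ, μ (s n) = ENNReal.ofReal (1 - Real.exp (-lam * (t + ((n:ℝ)+1)⁻¹))) := by
      intro n
      apply hcdf
      positivity
    have hreal : Tendsto (fun n : ℕ => 1 - Real.exp (-lam * (t + ((n:ℝ)+1)⁻¹))) atTop
        (nhds (1 - Real.exp (-lam * t))) := by
      have h0 : Tendsto (fun n : ℕ => t + ((n:ℝ)+1)⁻¹) atTop (nhds t) := by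
        have := tendsto_one_div_add_atTop_nhds_zero_nat (𝕜 := ℝ)
        simp only [one_div] at this
        simpa using tendsto_const_nhds.add this
      have hc : Continuous fun x : ℝ => 1 - Real.exp (-lam * x) := by continuity
      exact (hc.tendsto t).comp h0
    have htend2 : Tendsto (μ ∘ s) atTop (nhds (ENNReal.ofReal (1 - Real.exp (-lam * t)))) := by
      have := ENNReal.tendsto_ofReal hreal
      convert this using 2 with n
      simp only [Function.comp_apply, hval n]
    rw [hse] at *
    have : μ (⋂ n, s n) = ENNReal.ofReal (1 - Real.exp (-lam * t)) :=
      tendsto_nhds_unique htend htend2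
    rw [this, neg_mul]
  · rw [if_neg ht]
    simp only [ENNReal.ofReal_zero]
    have hsub : X ⁻¹' Iic t ⊆ {ω | X ω < 0} := by
      intro ω hω
      simp only [mem_preimage, mem_Iic] at hω
      simp only [mem_setOf_eq]
      linarith [not_le.mp ht]
    exact le_antisymm (le_trans (measure_mono hsub) hzero.le) bot_le



lemma aux_tot {lam w : ℝ} (hlam : 0 < lam) (hw : 0 ≤ w) :
    ∫ x, Real.exp (-(w * x)) ∂(expMeasure lam) = lam / (lam + w) := by
  have hlw : 0 < lam + w := by linarith
  rw [aux_exp_integral hlam]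
  have h1 : ∀ x : ℝ, lam * Real.exp (-(lam * x)) * Real.exp (-(w * x))
      = lam * Real.exp (-((lam + w) * x)) := by
    intro x
    rw [mul_assoc, ← Real.exp_add]
    congr 2
    ring
  simp_rw [h1]
  rw [integral_const_mul, aux_int_exp hlw 0]
  rw [mul_zero, neg_zero, Real.exp_zero]
  field_simp

lemma aux_cut {lam w : ℝ} (hlam : 0 < lam) (hw : 0 ≤ w) {y : ℝ} (hy : 0 < y) :
    (∫ x, (if x < y then 0 else Real.exp (-(w * x))) ∂(expMeasure lam))
      = lam / (lam + w) * Real.exp (-((lam + w) * y)) := by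
  have hlw : 0 < lam + w := by linarith
  rw [aux_exp_integral hlam]
  have h1 : ∀ x : ℝ, lam * Real.exp (-(lam * x)) * (if x < y then 0 else Real.exp (-(w * x)))
      = Set.indicator (Ici y) (fun x => lam * Real.exp (-((lam + w) * x))) x := by
    intro x
    by_cases h : x < y
    · rw [if_pos h, Set.indicator_of_notMem (by simpa [mem_Ici] using h)]
      ring
    · rw [if_neg h, Set.indicator_of_mem (by simpa [mem_Ici] using not_lt.mp h)]
      rw [mul_assoc, ← Real.exp_add]
      congr 2
      ring
  simp_rw [h1]
  rw [setIntegral_indicator measurableSet_Ici]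
  have h2 : Ioi (0:ℝ) ∩ Ici y = Ici y := by
    apply inter_eq_right.mpr
    intro x hx
    exact lt_of_lt_of_le hy hx
  rw [h2, integral_Ici_eq_integral_Ioi, integral_const_mul, aux_int_exp hlw y]
  field_simp

lemma aux_expMeasure_neg {lam : ℝ} (hlam : 0 < lam) : expMeasure lam (Iic 0) = 0 := by
  haveI : IsProbabilityMeasure (expMeasure lam) := isProbabilityMeasure_expMeasure hlam
  rw [← ProbabilityTheory.ofReal_cdf (expMeasure lam) 0]
  have : cdf (expMeasure lam) 0 = (if (0:ℝ) ≤ 0 then 1 - Real.exp (-(lam * 0)) else 0) :=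
    cdf_expMeasure_eq hlam 0
  rw [this]
  simp

lemma aux_pair {lam w : ℝ} (hlam : 0 < lam) (hw : 0 ≤ w)
    (G : Measure ℝ) [IsProbabilityMeasure G] (hG0 : G (Set.Iic 0) = 0) :
    (∫ p : ℝ × ℝ, gfun w p ∂((expMeasure lam).prod G))
      = lam / (lam + w) * ∫ y, Real.exp (-((lam + w) * y)) ∂G := by
  haveI : IsProbabilityMeasure (expMeasure lam) := isProbabilityMeasure_expMeasure hlam
  have haeG : ∀ᵐ y ∂G, 0 < y := by
    rw [ae_iff]
    convert hG0 using 2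
    ext y
    simp [not_lt]
  have hψm : Measurable (gfun w) := gfun_meas w
  have haeprod : ∀ᵐ p : ℝ × ℝ ∂((expMeasure lam).prod G), 0 < p.1 := by
    rw [ae_iff]
    have : {p : ℝ × ℝ | ¬ 0 < p.1} = (Iic 0) ×ˢ (univ : Set ℝ) := by
      ext p; simp [not_lt]
    rw [this, Measure.prod_prod, aux_expMeasure_neg hlam, zero_mul]
  have hψint : Integrable (gfun w) ((expMeasure lam).prod G) := by
    apply Integrable.mono' (integrable_const 1) hψm.aestronglyMeasurable
    filter_upwards [haeprod] with p hp
    rw [Real.norm_eq_abs, gfun]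
    split_ifs with h
    · simp
    · rw [abs_of_nonneg (Real.exp_nonneg _)]
      apply Real.exp_le_one_iff.mpr
      have : 0 ≤ w * p.1 := mul_nonneg hw hp.le
      linarith
  rw [integral_prod_symm _ hψint]
  have : ∀ᵐ y ∂G, (∫ x, gfun w (x, y) ∂(expMeasure lam))
      = lam / (lam + w) * Real.exp (-((lam + w) * y)) := by
    filter_upwards [haeG] with y hy
    exact aux_cut hlam hw hy
  rw [integral_congr_ae this, integral_const_mul]

lemma aux_phi_le_one (G : Measure ℝ) [IsProbabilityMeasure G] (hG0 : G (Set.Iic 0) = 0)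
    {s : ℝ} (hs : 0 ≤ s) : (∫ y, Real.exp (-(s * y)) ∂G) ≤ 1 := by
  have haeG : ∀ᵐ y ∂G, 0 < y := by
    rw [ae_iff]
    convert hG0 using 2
    ext y
    simp [not_lt]
  have hle : ∀ᵐ y ∂G, Real.exp (-(s * y)) ≤ 1 := by
    filter_upwards [haeG] with y hy
    apply Real.exp_le_one_iff.mpr
    have : 0 ≤ s * y := mul_nonneg hs hy.le
    linarith
  have hint : Integrable (fun y => Real.exp (-(s * y))) G := by
    apply Integrable.mono' (integrable_const 1) (((measurable_const.mul measurable_id').neg.exp).aestronglyMeasurable)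
    filter_upwards [hle] with y hy
    rw [Real.norm_eq_abs, abs_of_nonneg (Real.exp_nonneg _)]
    exact hy
  calc (∫ y, Real.exp (-(s * y)) ∂G) ≤ ∫ _, (1:ℝ) ∂G :=
        integral_mono_ae hint (integrable_const 1) hle
    _ = 1 := by simp

lemma aux_phi_lt_one (G : Measure ℝ) [IsProbabilityMeasure G] (hG0 : G (Set.Iic 0) = 0)
    {s : ℝ} (hs : 0 < s) : (∫ y, Real.exp (-(s * y)) ∂G) < 1 := by
  have haeG : ∀ᵐ y ∂G, 0 < y := by
    rw [ae_iff]
    convert hG0 using 2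
    ext y
    simp [not_lt]
  have hint : Integrable (fun y => Real.exp (-(s * y))) G := by
    apply Integrable.mono' (integrable_const 1) (((measurable_const.mul measurable_id').neg.exp).aestronglyMeasurable)
    filter_upwards [haeG] with y hy
    rw [Real.norm_eq_abs, abs_of_nonneg (Real.exp_nonneg _)]
    apply Real.exp_le_one_iff.mpr
    have : 0 ≤ s * y := mul_nonneg hs.le hy.le
    show -(s * y) ≤ 0
    linarith
  rcases lt_or_ge (∫ y, Real.exp (-(s * y)) ∂G) 1 with h | h
  · exact h
  exfalso
  have hnonneg : ∀ᵐ y ∂G, 0 ≤ 1 - Real.exp (-(s * y)) := by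
    filter_upwards [haeG] with y hy
    have : Real.exp (-(s * y)) ≤ 1 := by
      apply Real.exp_le_one_iff.mpr
      have : 0 ≤ s * y := mul_nonneg hs.le hy.le
      linarith
    linarith
  have hsubint : Integrable (fun y => 1 - Real.exp (-(s * y))) G := (integrable_const 1).sub hint
  have hival : (∫ y, (1 - Real.exp (-(s * y))) ∂G) = 0 := by
    have h1 : (∫ y, (1 - Real.exp (-(s * y))) ∂G) = 1 - ∫ y, Real.exp (-(s * y)) ∂G := by
      rw [integral_sub (integrable_const 1) hint]
      simp
    have h2 : (∫ y, (1 - Real.exp (-(s * y))) ∂G) ≥ 0 := integral_nonneg_of_ae hnonneg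
    have h3 : 1 - (∫ y, Real.exp (-(s * y)) ∂G) ≤ 0 := by linarith
    linarith [h1 ▸ h2, h1 ▸ h3]
  have hz := (integral_eq_zero_iff_of_nonneg_ae hnonneg hsubint).mp hival
  haveI : (ae G).NeBot := ae_neBot.mpr (IsProbabilityMeasure.ne_zero (μ := G))
  obtain ⟨y, hy1, hy2⟩ := (hz.and haeG).exists
  simp only [Pi.zero_apply] at hy1
  have : Real.exp (-(s * y)) = 1 := by linarith
  rw [Real.exp_eq_one_iff] at this
  have : s * y = 0 := by linarith [neg_eq_zero.mp this]
  nlinarith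
/-- Geiger–Muller counter with Poisson(λ) input and i.i.d.
locking times with law G: the Laplace transform of the time T until the first
lost particle is φ(z) = λ(1 − φ_G(z+λ)) / (z + λ(1 − φ_G(z+λ))). -/
theorem geiger_laplace_transform
    {Ω : Type*} [MeasurableSpace Ω] (μ : Measure Ω) [IsProbabilityMeasure μ]
    (lam : ℝ) (hlam : 0 < lam)
    (G : Measure ℝ) [IsProbabilityMeasure G] (hG0 : G (Set.Iic 0) = 0)
    (τ η : ℕ → Ω → ℝ)
    (hmeas : ∀ i, Measurable fun ω => (τ i ω, η i ω))
    (hindep : iIndepFun (fun i ω => (τ i ω, η i ω)) μ)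
    (hident : ∀ i j, IdentDistrib (fun ω => (τ i ω, η i ω))
      (fun ω => (τ j ω, η j ω)) μ μ)
    (hseq : IndepFun (fun ω i => τ i ω) (fun ω i => η i ω) μ)
    (hτ : ∀ i, ∀ t ≥ (0:ℝ),
      μ {ω | τ i ω < t} = ENNReal.ofReal (1 - Real.exp (-lam * t)))
    (hη : ∀ i, Measure.map (η i) μ = G)
    (ν : Ω → ℕ) (hν : ∀ ω, ν ω = sInf {k | 1 ≤ k ∧ τ k ω < η k ω})
    (T : Ω → ℝ) (hT : ∀ ω, T ω = ∑ i ∈ Finset.Icc 1 (ν ω), τ i ω)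
    (φG : ℝ → ℝ) (hφG : ∀ s, φG s = ∫ x, Real.exp (-s * x) ∂G) :
    ∀ z > 0, ∫ ω, Real.exp (-z * T ω) ∂μ =
      lam * (1 - φG (z + lam)) / (z + lam * (1 - φG (z + lam))) := by
  intro z hz
  rw [show z + lam = lam + z from add_comm z lam]
  haveI : IsProbabilityMeasure (expMeasure lam) := isProbabilityMeasure_expMeasure hlam
  -- basic measurability
  have hτm : ∀ k, Measurable (τ k) := fun k => measurable_fst.comp (hmeas k)
  have hηm : ∀ k, Measurable (η k) := fun k => measurable_snd.comp (hmeas k)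
  have hAm : ∀ k, MeasurableSet {ω | τ k ω < η k ω} :=
    fun k => (hmeas k) (measurableSet_lt measurable_fst measurable_snd)
  -- τ is a.s. nonnegative
  have hτpos : ∀ k, ∀ᵐ ω ∂μ, 0 ≤ τ k ω := by
    intro k
    rw [ae_iff]
    simp only [not_le]
    simpa using hτ k 0 le_rfl
  -- law of τ k
  have hL : ∀ k, Measure.map (τ k) μ = expMeasure lam :=
    fun k => aux_law_exp μ hlam (hτm k) (fun t ht => hτ k t ht)
  -- pairwise independence within pairs and joint law
  have hpair : ∀ k, IndepFun (τ k) (η k) μ :=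
    fun k => hseq.comp (measurable_pi_apply k) (measurable_pi_apply k)
  have hjoint : ∀ k, Measure.map (fun ω => (τ k ω, η k ω)) μ = (expMeasure lam).prod G := by
    intro k
    rw [← hL k, ← hη k]
    exact (ProbabilityTheory.indepFun_iff_map_prod_eq_prod_map_map
      (hτm k).aemeasurable (hηm k).aemeasurable).mp (hpair k)
  -- φG facts
  have hphi : ∀ s : ℝ, (∫ y, Real.exp (-(s * y)) ∂G) = φG s := by
    intro s
    rw [hφG s]
    congr 1
    funext y
    rw [neg_mul]
  -- per-index expectations
  have hB : ∀ w : ℝ, 0 ≤ w → ∀ k, (∫ ω, gfun w (τ k ω, η k ω) ∂μ)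
      = lam / (lam + w) * φG (lam + w) := by
    intro w hw k
    have h1 : (∫ ω, gfun w (τ k ω, η k ω) ∂μ)
        = ∫ p, gfun w p ∂(Measure.map (fun ω => (τ k ω, η k ω)) μ) :=
      (integral_map (hmeas k).aemeasurable (gfun_meas w).aestronglyMeasurable).symm
    rw [h1, hjoint k, aux_pair hlam hw G hG0, hphi]
  have hTot : ∀ w : ℝ, 0 ≤ w → ∀ k, (∫ ω, Real.exp (-(w * τ k ω)) ∂μ) = lam / (lam + w) := by
    intro w hw k
    have h1 : (∫ ω, Real.exp (-(w * τ k ω)) ∂μ)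
        = ∫ x, Real.exp (-(w * x)) ∂(Measure.map (τ k) μ) :=
      (integral_map (hτm k).aemeasurable
        ((measurable_id.const_mul w).neg.exp).aestronglyMeasurable).symm
    rw [h1, hL k, aux_tot hlam hw]
  -- integrability helpers
  have hexp_int : ∀ k, Integrable (fun ω => Real.exp (-(z * τ k ω))) μ := by
    intro k
    apply Integrable.mono' (integrable_const 1)
      ((((hτm k).const_mul z).neg.exp).aestronglyMeasurable)
    filter_upwards [hτpos k] with ω hω
    rw [Real.norm_eq_abs, abs_of_nonneg (Real.exp_nonneg _)]
    apply Real.exp_le_one_iff.mpr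
    have : 0 ≤ z * τ k ω := mul_nonneg hz.le hω
    show -(z * τ k ω) ≤ 0
    linarith
  have hg_int : ∀ k, Integrable (fun ω => gfun z (τ k ω, η k ω)) μ := by
    intro k
    apply Integrable.mono' (hexp_int k)
      (((gfun_meas z).comp (hmeas k)).aestronglyMeasurable)
    filter_upwards with ω
    simp only [Function.comp_apply, Real.norm_eq_abs, gfun]
    split_ifs with h
    · simp [Real.exp_nonneg]
    · rw [abs_of_nonneg (Real.exp_nonneg _)]
  have hh_int : ∀ k, Integrable (fun ω => hfun z (τ k ω, η k ω)) μ := by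
    intro k
    apply Integrable.mono' (hexp_int k)
      (((hfun_meas z).comp (hmeas k)).aestronglyMeasurable)
    filter_upwards with ω
    simp only [Function.comp_apply, Real.norm_eq_abs, hfun]
    split_ifs with h
    · rw [abs_of_nonneg (Real.exp_nonneg _)]
    · simp [Real.exp_nonneg]
  have hA : ∀ k, (∫ ω, hfun z (τ k ω, η k ω) ∂μ)
      = lam / (lam + z) * (1 - φG (lam + z)) := by
    intro k
    have hdecomp : ∀ ω, hfun z (τ k ω, η k ω)
        = Real.exp (-(z * τ k ω)) - gfun z (τ k ω, η k ω) := by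
      intro ω
      simp only [hfun, gfun]
      split_ifs with h <;> ring
    calc (∫ ω, hfun z (τ k ω, η k ω) ∂μ)
        = ∫ ω, (Real.exp (-(z * τ k ω)) - gfun z (τ k ω, η k ω)) ∂μ := by
          apply integral_congr_ae
          filter_upwards with ω using hdecomp ω
      _ = (∫ ω, Real.exp (-(z * τ k ω)) ∂μ) - ∫ ω, gfun z (τ k ω, η k ω) ∂μ :=
          integral_sub (hexp_int k) (hg_int k)
      _ = lam / (lam + z) - lam / (lam + z) * φG (lam + z) := by
          rw [hTot z hz.le k, hB z hz.le k]
      _ = lam / (lam + z) * (1 - φG (lam + z)) := by ring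
  -- ν characterization
  have hνkey : ∀ ω (n : ℕ), ν ω = n + 1 ↔
      (τ (n+1) ω < η (n+1) ω ∧ ∀ k, 1 ≤ k → k < n + 1 → ¬ τ k ω < η k ω) := by
    intro ω n
    rw [hν ω]
    constructor
    · intro h
      have hne : {k | 1 ≤ k ∧ τ k ω < η k ω}.Nonempty := by
        by_contra hemp
        rw [Set.not_nonempty_iff_eq_empty] at hemp
        rw [hemp, Nat.sInf_empty] at h
        omega
      have hmem := Nat.sInf_mem hne
      rw [h] at hmem
      refine ⟨hmem.2, fun k hk1 hk2 hAk => ?_⟩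
      have hle := Nat.sInf_le (show k ∈ {k | 1 ≤ k ∧ τ k ω < η k ω} from ⟨hk1, hAk⟩)
      omega
    · rintro ⟨h1, h2⟩
      have hmem : (n+1) ∈ {k | 1 ≤ k ∧ τ k ω < η k ω} := ⟨by omega, h1⟩
      have hle := Nat.sInf_le hmem
      have hmem2 := Nat.sInf_mem ⟨n+1, hmem⟩
      rcases lt_or_ge (sInf {k | 1 ≤ k ∧ τ k ω < η k ω}) (n+1) with hlt | hge
      · exact absurd hmem2.2 (h2 _ hmem2.1 hlt)
      · omega
  have hν0 : ∀ ω, ν ω = 0 ↔ ∀ k, 1 ≤ k → ¬ τ k ω < η k ω := by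
    intro ω
    rw [hν ω]
    constructor
    · intro h k hk hAk
      have hmem : k ∈ {k | 1 ≤ k ∧ τ k ω < η k ω} := ⟨hk, hAk⟩
      have hmem2 := Nat.sInf_mem ⟨k, hmem⟩
      rw [h] at hmem2
      exact absurd hmem2.1 (by omega)
    · intro h
      have he : {k | 1 ≤ k ∧ τ k ω < η k ω} = ∅ := by
        ext k
        simp only [mem_setOf_eq, mem_empty_iff_false, iff_false, not_and]
        exact fun h1 => h k h1
      rw [he, Nat.sInf_empty]
  -- measurability of level sets of ν
  have hSm : ∀ n : ℕ, MeasurableSet {ω | ν ω = n} := by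
    intro n
    cases n with
    | zero =>
      have he : {ω | ν ω = 0} = ⋂ k, ⋂ (_ : 1 ≤ k), {ω | τ k ω < η k ω}ᶜ := by
        ext ω
        simp only [mem_setOf_eq, mem_iInter, mem_compl_iff, hν0 ω]
      rw [he]
      exact MeasurableSet.iInter fun k => MeasurableSet.iInter fun _ => (hAm k).compl
    | succ n =>
      have he : {ω | ν ω = n + 1} = {ω | τ (n+1) ω < η (n+1) ω} ∩
          ⋂ k, ⋂ (_ : 1 ≤ k), ⋂ (_ : k < n + 1), {ω | τ k ω < η k ω}ᶜ := by
        ext ω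
        simp only [mem_setOf_eq, mem_inter_iff, mem_iInter, mem_compl_iff, hνkey ω n]
      rw [he]
      exact (hAm (n+1)).inter (MeasurableSet.iInter fun k => MeasurableSet.iInter fun _ =>
        MeasurableSet.iInter fun _ => (hAm k).compl)
  have hνm : Measurable ν := by
    apply measurable_to_countable'
    intro n
    have : ν ⁻¹' {n} = {ω | ν ω = n} := by
      ext ω
      simp
    rw [this]
    exact hSm n
  -- measurability and integrability of exp(-zT)
  have hTm : Measurable T := by
    have h1 : Measurable fun ω => ∑ i ∈ Finset.Icc 1 (ν ω), τ i ω :=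
      aux_meas_comp (fun n => Finset.measurable_sum _ (fun i _ => hτm i)) hνm
    have h2 : T = fun ω => ∑ i ∈ Finset.Icc 1 (ν ω), τ i ω := funext hT
    rw [h2]
    exact h1
  have hfm : Measurable fun ω => Real.exp (-z * T ω) := ((hTm.const_mul (-z)).exp)
  have hTpos : ∀ᵐ ω ∂μ, 0 ≤ T ω := by
    filter_upwards [ae_all_iff.2 hτpos] with ω hω
    rw [hT ω]
    exact Finset.sum_nonneg fun i _ => hω i
  have hf_int : Integrable (fun ω => Real.exp (-z * T ω)) μ := by
    apply Integrable.mono' (integrable_const 1) hfm.aestronglyMeasurable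
    filter_upwards [hTpos] with ω hω
    rw [Real.norm_eq_abs, abs_of_nonneg (Real.exp_nonneg _)]
    apply Real.exp_le_one_iff.mpr
    nlinarith
  -- decomposition over the partition {ν = n}
  have hcover : (⋃ n, {ω | ν ω = n}) = univ := by
    ext ω
    simp only [mem_iUnion, mem_setOf_eq, mem_univ, iff_true]
    exact ⟨ν ω, rfl⟩
  have hdisj : Pairwise (Function.onFun Disjoint fun n => {ω | ν ω = n}) := by
    intro m n hmn
    simp only [Function.onFun]
    apply Set.disjoint_left.mpr
    intro ω h1 h2
    exact hmn (h1.symm.trans h2)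
  have hsplit : (∫ ω, Real.exp (-z * T ω) ∂μ)
      = ∑' n, ∫ ω in {ω | ν ω = n}, Real.exp (-z * T ω) ∂μ := by
    rw [← setIntegral_univ, ← hcover, integral_iUnion hSm hdisj]
    rw [hcover]
    exact hf_int.integrableOn
  -- the event {ν = 0} is null
  have hAc : ∀ k, μ ((fun ω => (τ k ω, η k ω)) ⁻¹' {p : ℝ × ℝ | ¬ p.1 < p.2})
      = ENNReal.ofReal (φG lam) := by
    intro k
    have h0 := hB 0 le_rfl k
    simp only [gfun, zero_mul, neg_zero, Real.exp_zero, add_zero, div_self hlam.ne',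
      one_mul] at h0
    have he : (fun ω => (if τ k ω < η k ω then (0:ℝ) else 1))
        = Set.indicator ((fun ω => (τ k ω, η k ω)) ⁻¹' {p : ℝ × ℝ | ¬ p.1 < p.2}) 1 := by
      funext ω
      by_cases hh : τ k ω < η k ω
      · simp [Set.indicator_apply, mem_preimage, hh]
      · simp [Set.indicator_apply, mem_preimage, hh, not_lt.mp hh]
    rw [he] at h0
    rw [integral_indicator_one ((hmeas k) (show MeasurableSet {p : ℝ × ℝ | ¬ p.1 < p.2} from
      (measurableSet_lt measurable_fst measurable_snd).compl))] at h0
    rw [← h0, measureReal_def, ENNReal.ofReal_toReal (measure_ne_top μ _)]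
  have hclt : φG lam < 1 := by
    rw [← hphi lam]
    exact aux_phi_lt_one G hG0 hlam
  have hν0null : μ {ω | ν ω = 0} = 0 := by
    have hsubn : ∀ n : ℕ, {ω | ν ω = 0} ⊆
        ⋂ k ∈ Finset.Icc 1 n, (fun ω => (τ k ω, η k ω)) ⁻¹' {p : ℝ × ℝ | ¬ p.1 < p.2} := by
      intro n ω hω
      rw [Set.mem_iInter₂]
      intro k hk
      have := (hν0 ω).mp hω k (Finset.mem_Icc.mp hk).1
      simpa [mem_preimage] using this
    have hprodn : ∀ n : ℕ, μ (⋂ k ∈ Finset.Icc 1 n,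
        (fun ω => (τ k ω, η k ω)) ⁻¹' {p : ℝ × ℝ | ¬ p.1 < p.2})
        = ENNReal.ofReal (φG lam) ^ n := by
      intro n
      rw [hindep.measure_inter_preimage_eq_mul (S := Finset.Icc 1 n)
        (sets := fun _ => {p : ℝ × ℝ | ¬ p.1 < p.2})
        (fun i _ => (measurableSet_lt measurable_fst measurable_snd).compl)]
      rw [Finset.prod_congr rfl (fun k _ => hAc k), Finset.prod_const, Nat.card_Icc]
      simp
    have hle : ∀ n : ℕ, μ {ω | ν ω = 0} ≤ ENNReal.ofReal (φG lam) ^ n :=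
      fun n => le_trans (measure_mono (hsubn n)) (le_of_eq (hprodn n))
    have htend0 : Tendsto (fun n : ℕ => ENNReal.ofReal (φG lam) ^ n) atTop (nhds 0) :=
      ENNReal.tendsto_pow_atTop_nhds_zero_of_lt_one (ENNReal.ofReal_lt_one.mpr hclt)
    exact le_antisymm (ge_of_tendsto' htend0 hle) bot_le
  -- value of the n-th term
  have hterm : ∀ n : ℕ, (∫ ω in {ω | ν ω = n + 1}, Real.exp (-z * T ω) ∂μ)
      = (lam / (lam + z) * φG (lam + z)) ^ n * (lam / (lam + z) * (1 - φG (lam + z))) := by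
    intro n
    have hid : ∀ ω, Set.indicator {ω | ν ω = n + 1} (fun ω => Real.exp (-z * T ω)) ω
        = ∏ k ∈ Finset.Icc 1 (n + 1),
            (if k = n + 1 then hfun z else gfun z) (τ k ω, η k ω) := by
      intro ω
      by_cases hω : ν ω = n + 1
      · rw [Set.indicator_of_mem (show ω ∈ {ω | ν ω = n + 1} from hω)]
        obtain ⟨h1, h2⟩ := (hνkey ω n).mp hω
        have hL1 : Real.exp (-z * T ω) = ∏ k ∈ Finset.Icc 1 (n + 1),
            Real.exp (-(z * τ k ω)) := by
          rw [hT ω, hω, ← Real.exp_sum]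
          congr 1
          rw [Finset.mul_sum]
          apply Finset.sum_congr rfl
          intro i _
          ring
        rw [hL1]
        apply Finset.prod_congr rfl
        intro k hk
        rw [Finset.mem_Icc] at hk
        by_cases hkn : k = n + 1
        · rw [if_pos hkn, hfun]
          subst hkn
          rw [if_pos h1]
        · rw [if_neg hkn, gfun]
          simp only
          rw [if_neg (h2 k hk.1 (by omega))]
      · rw [Set.indicator_of_notMem (show ω ∉ {ω | ν ω = n + 1} from hω)]
        rw [hνkey ω n] at hω
        push_neg at hω
        by_cases h1 : τ (n+1) ω < η (n+1) ω
        · obtain ⟨k, hk1, hk2, hk3⟩ := hω h1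
          symm
          apply Finset.prod_eq_zero (Finset.mem_Icc.mpr ⟨hk1, by omega⟩)
          rw [if_neg (by omega : ¬ k = n + 1), gfun]
          simp only
          rw [if_pos hk3]
        · symm
          apply Finset.prod_eq_zero (Finset.mem_Icc.mpr ⟨by omega, le_refl (n+1)⟩)
          rw [if_pos rfl, hfun]
          simp only
          rw [if_neg h1]
    have hintegral : (∫ ω in {ω | ν ω = n + 1}, Real.exp (-z * T ω) ∂μ)
        = ∫ ω, ∏ k ∈ Finset.Icc 1 (n + 1),
            (if k = n + 1 then hfun z else gfun z) (τ k ω, η k ω) ∂μ := by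
      rw [← integral_indicator (hSm (n+1))]
      exact integral_congr_ae (Filter.Eventually.of_forall hid)
    -- independence of the composed family
    have hYind : iIndepFun
        (fun k ω => (if k = n + 1 then hfun z else gfun z) (τ k ω, η k ω)) μ := by
      have := hindep.comp (fun k => if k = n + 1 then hfun z else gfun z)
        (fun k => by
          by_cases h : k = n + 1
          · simpa [h] using hfun_meas z
          · simpa [h] using gfun_meas z)
      exact this
    have hYm : ∀ k, Measurable fun ω =>
        (if k = n + 1 then hfun z else gfun z) (τ k ω, η k ω) := by
      intro k
      by_cases h : k = n + 1
      · simp only [if_pos h]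
        exact (hfun_meas z).comp (hmeas k)
      · simp only [if_neg h]
        exact (gfun_meas z).comp (hmeas k)
    have hYb : ∀ k, ∀ᵐ ω ∂μ, |(if k = n + 1 then hfun z else gfun z) (τ k ω, η k ω)| ≤ 1 := by
      intro k
      filter_upwards [hτpos k] with ω hω
      have hexp1 : Real.exp (-(z * τ k ω)) ≤ 1 := by
        apply Real.exp_le_one_iff.mpr
        have : 0 ≤ z * τ k ω := mul_nonneg hz.le hω
        linarith
      split_ifs with h
      · rw [hfun]
        simp only
        split_ifs with h2
        · rw [abs_of_nonneg (Real.exp_nonneg _)]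
          exact hexp1
        · simp
      · rw [gfun]
        simp only
        split_ifs with h2
        · simp
        · rw [abs_of_nonneg (Real.exp_nonneg _)]
          exact hexp1
    have hprodint := aux_integral_prod hYind hYm hYb (Finset.Icc 1 (n + 1))
    rw [hintegral, hprodint]
    have hsplitprod : (∏ k ∈ Finset.Icc 1 (n + 1),
        ∫ ω, (if k = n + 1 then hfun z else gfun z) (τ k ω, η k ω) ∂μ)
        = (∏ k ∈ Finset.Icc 1 n,
            ∫ ω, (if k = n + 1 then hfun z else gfun z) (τ k ω, η k ω) ∂μ)
          * ∫ ω, (if n + 1 = n + 1 then hfun z else gfun z) (τ (n+1) ω, η (n+1) ω) ∂μ :=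
      Finset.prod_Icc_succ_top (by omega) _
    rw [hsplitprod]
    have he1 : (∏ k ∈ Finset.Icc 1 n,
        ∫ ω, (if k = n + 1 then hfun z else gfun z) (τ k ω, η k ω) ∂μ)
        = (lam / (lam + z) * φG (lam + z)) ^ n := by
      have hcongr : ∀ k ∈ Finset.Icc 1 n,
          (∫ ω, (if k = n + 1 then hfun z else gfun z) (τ k ω, η k ω) ∂μ)
          = lam / (lam + z) * φG (lam + z) := by
        intro k hk
        rw [Finset.mem_Icc] at hk
        rw [if_neg (by omega : ¬ k = n + 1)]
        exact hB z hz.le k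
      rw [Finset.prod_congr rfl hcongr, Finset.prod_const, Nat.card_Icc]
      simp
    have he2 : (∫ ω, (if n + 1 = n + 1 then hfun z else gfun z) (τ (n+1) ω, η (n+1) ω) ∂μ)
        = lam / (lam + z) * (1 - φG (lam + z)) := by
      rw [if_pos rfl]
      exact hA (n+1)
    rw [he1, he2]
  -- bounds on the geometric ratio
  have hc0 : 0 ≤ φG (lam + z) := by
    rw [← hphi]
    exact integral_nonneg fun y => Real.exp_nonneg _
  have hc1 : φG (lam + z) ≤ 1 := by
    rw [← hphi]
    exact aux_phi_le_one G hG0 (by linarith)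
  have hlz : (0:ℝ) < lam + z := by linarith
  have hB0 : 0 ≤ lam / (lam + z) * φG (lam + z) :=
    mul_nonneg (div_nonneg hlam.le hlz.le) hc0
  have hB1 : lam / (lam + z) * φG (lam + z) < 1 := by
    have h1 : lam / (lam + z) * φG (lam + z) ≤ lam / (lam + z) := by
      calc lam / (lam + z) * φG (lam + z) ≤ lam / (lam + z) * 1 :=
            mul_le_mul_of_nonneg_left hc1 (div_nonneg hlam.le hlz.le)
        _ = lam / (lam + z) := mul_one _
    have h2 : lam / (lam + z) < 1 := (div_lt_one hlz).mpr (by linarith)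
    linarith
  -- summability
  have hgeom : Summable fun n : ℕ => (lam / (lam + z) * φG (lam + z)) ^ n
      * (lam / (lam + z) * (1 - φG (lam + z))) :=
    (summable_geometric_of_lt_one hB0 hB1).mul_right _
  have hsum : Summable fun n : ℕ => ∫ ω in {ω | ν ω = n}, Real.exp (-z * T ω) ∂μ := by
    apply (summable_nat_add_iff 1).mp
    have he : (fun n : ℕ => ∫ ω in {ω | ν ω = n + 1}, Real.exp (-z * T ω) ∂μ)
        = fun n : ℕ => (lam / (lam + z) * φG (lam + z)) ^ n
            * (lam / (lam + z) * (1 - φG (lam + z))) := funext fun n => hterm n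
    show Summable fun n : ℕ => ∫ ω in {ω | ν ω = n + 1}, Real.exp (-z * T ω) ∂μ
    rw [he]
    exact hgeom
  have hzero0 : (∫ ω in {ω | ν ω = 0}, Real.exp (-z * T ω) ∂μ) = 0 := by
    rw [Measure.restrict_eq_zero.mpr hν0null]
    exact integral_zero_measure _
  rw [hsplit, hsum.tsum_eq_zero_add, hzero0, zero_add]
  have htsum : (∑' n : ℕ, ∫ ω in {ω | ν ω = n + 1}, Real.exp (-z * T ω) ∂μ)
      = ∑' n : ℕ, (lam / (lam + z) * φG (lam + z)) ^ n
          * (lam / (lam + z) * (1 - φG (lam + z))) := tsum_congr hterm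
  rw [htsum, tsum_mul_right, tsum_geometric_of_lt_one hB0 hB1]
  -- final algebra
  have hd : (0:ℝ) < z + lam * (1 - φG (lam + z)) := by nlinarith
  have hkey : 1 - lam / (lam + z) * φG (lam + z)
      = (z + lam * (1 - φG (lam + z))) / (lam + z) := by
    field_simp
    ring
  rw [hkey, inv_div]
  field_simp
end
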